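/- Lower bound: if v : Finset N → ℝ is monotone and v(∅) = 0, then for every player i, φ_i(v) ≥ v({i})/n, where n = |N|. -/

import Mathlib

open Finset

noncomputable def shapley {α : Type*} [Fintype α] [DecidableEq α]
    (v : Finset α → ℝ) (i : α) : ℝ :=
  ∑ S ∈ (Finset.univ.erase i).powerset,
    ((Nat.factorial S.card * Nat.factorial (Fintype.card α - S.card - 1) : ℝ) /
      (Nat.factorial (Fintype.card α))) * (v (insert i S) - v S)

theorem shapley_lower_bound {α : Type*} [Fintype α] [DecidableEq α]
    (hcard : 1 ≤ Fintype.card α) (v : Finset α → ℝ)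
    (hmono : ∀ S T : Finset α, S ⊆ T → v S ≤ v T)
    (hv0 : v ∅ = 0) (i : α) :
    v {i} / (Fintype.card α : ℝ) ≤ shapley v i := by
  have hterm : ∀ S ∈ (Finset.univ.erase i).powerset,
      0 ≤ ((Nat.factorial S.card * Nat.factorial (Fintype.card α - S.card - 1) : ℝ) /
        (Nat.factorial (Fintype.card α))) * (v (insert i S) - v S) := by
    intro S _
    apply mul_nonneg
    · positivity
    · have := hmono S (insert i S) (subset_insert i S)
      linarith
  have hmem : (∅ : Finset α) ∈ (Finset.univ.erase i).powerset := by simp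
  have hle := Finset.single_le_sum hterm hmem
  have hco : ((Nat.factorial (∅ : Finset α).card *
        Nat.factorial (Fintype.card α - (∅ : Finset α).card - 1) : ℝ) /
        (Nat.factorial (Fintype.card α))) * (v (insert i ∅) - v ∅)
      = v {i} / (Fintype.card α : ℝ) := by
    have hn : (Fintype.card α).factorial
        = Fintype.card α * (Fintype.card α - 1).factorial := by
      rw [← Nat.succ_pred_eq_of_pos (by omega : 0 < Fintype.card α), Nat.factorial_succ]
      simp
    simp only [Finset.card_empty, Nat.factorial_zero, Nat.sub_zero, insert_empty_eq, hv0]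
    rw [hn]
    have h1 : ((Fintype.card α - 1).factorial : ℝ) ≠ 0 := by positivity
    field_simp
    push_cast
    ring
  rw [hco] at hle
  exact le_trans (le_of_eq rfl) (hle.trans_eq (by rfl))
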